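/- Let Φ be the linear functional on ℚ(q)[z] determined by Φ([n,z choose n]_q) = 1/(-q^2;q)_n for all n ≥ 0 (using the basis {[n,z choose n]_q}). Then for all 0 ≤ m ≤ n, Φ([m,z choose n]_q) = (-1)^{n-m} q^{n-m} / (-q^2;q)_n. -/

import Mathlib

open Finset Polynomial

noncomputable def q : RatFunc ℚ := RatFunc.X

/-- q-integer `[k]_q = (1-q^k)/(1-q)` for `k : ℤ`. -/
noncomputable def qint (k : ℤ) : RatFunc ℚ := (1 - q ^ k) / (1 - q)

/-- q-factorial `[n]_q!`. -/
noncomputable def qfact (n : ℕ) : RatFunc ℚ := ∏ m ∈ Finset.range n, qint (m + 1)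

/-- q-Pochhammer `(A;Q)_n`. -/
noncomputable def qPoch (Q A : RatFunc ℚ) (n : ℕ) : RatFunc ℚ :=
  ∏ j ∈ Finset.range n, (1 - A * Q ^ j)

/-- The generalized q-binomial polynomial `[m, z choose n]_q`. -/
noncomputable def qbinomPoly (m n : ℕ) : Polynomial (RatFunc ℚ) :=
  Polynomial.C (qfact n)⁻¹ *
    ∏ k ∈ Finset.Icc ((m : ℤ) - n + 1) (m : ℤ),
      (Polynomial.C (qint k) + Polynomial.C (q ^ k) * Polynomial.X)

lemma hq0 : q ≠ 0 := RatFunc.X_ne_zero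

lemma alg_ne {p : Polynomial ℚ} (h : p.eval 0 ≠ 0) :
    algebraMap (Polynomial ℚ) (RatFunc ℚ) p ≠ 0 := by
  have hp : p ≠ 0 := fun hh => h (by simp [hh])
  exact RatFunc.algebraMap_ne_zero hp

lemma one_sub_qpow_ne (n : ℕ) (hn : 1 ≤ n) : (1 : RatFunc ℚ) - q ^ n ≠ 0 := by
  have : (1 : RatFunc ℚ) - q ^ n = algebraMap (Polynomial ℚ) (RatFunc ℚ) (1 - X ^ n) := by
    simp only [map_sub, map_one, map_pow, RatFunc.algebraMap_X, q]
  rw [this]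
  apply alg_ne
  simp [Polynomial.eval_pow, zero_pow (by omega : n ≠ 0)]

lemma one_add_qpow_ne (n : ℕ) : (1 : RatFunc ℚ) + q ^ n ≠ 0 := by
  have : (1 : RatFunc ℚ) + q ^ n = algebraMap (Polynomial ℚ) (RatFunc ℚ) (1 + X ^ n) := by
    simp only [map_add, map_one, map_pow, RatFunc.algebraMap_X, q]
  rw [this]
  apply alg_ne
  rcases Nat.eq_zero_or_pos n with h | h
  · simp [h]
  · simp [Polynomial.eval_pow, zero_pow (by omega : n ≠ 0)]

lemma one_sub_q_ne : (1 : RatFunc ℚ) - q ≠ 0 := by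
  simpa using one_sub_qpow_ne 1 le_rfl

lemma qint_ne (n : ℕ) (hn : 1 ≤ n) : qint n ≠ 0 := by
  rw [qint, zpow_natCast]
  exact div_ne_zero (one_sub_qpow_ne n hn) one_sub_q_ne

lemma qfact_ne (n : ℕ) : qfact n ≠ 0 := by
  rw [qfact]
  exact Finset.prod_ne_zero_iff.2 fun m _ => by
    simpa using qint_ne (m + 1) (by omega)

lemma qPoch_ne (n : ℕ) : qPoch q (-q ^ 2) n ≠ 0 := by
  rw [qPoch]
  refine Finset.prod_ne_zero_iff.2 fun j _ => ?_
  have : (1 : RatFunc ℚ) - -q ^ 2 * q ^ j = 1 + q ^ (j + 2) := by ring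
  rw [this]; exact one_add_qpow_ne _

lemma qPoch_succ (n : ℕ) :
    qPoch q (-q ^ 2) (n + 1) = qPoch q (-q ^ 2) n * (1 + q ^ (n + 2)) := by
  rw [qPoch, Finset.prod_range_succ, qPoch]
  ring

lemma prod_Icc_top {M : Type*} [CommMonoid M] (a b : ℤ) (h : a ≤ b + 1) (f : ℤ → M) :
    ∏ k ∈ Finset.Icc a (b + 1), f k = f (b + 1) * ∏ k ∈ Finset.Icc a b, f k := by
  rw [show Finset.Icc a (b + 1) = insert (b + 1) (Finset.Icc a b) by
    ext x; simp only [Finset.mem_Icc, Finset.mem_insert]; omega]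
  exact Finset.prod_insert (by simp)

lemma prod_Icc_bot {M : Type*} [CommMonoid M] (a b : ℤ) (h : a ≤ b) (f : ℤ → M) :
    ∏ k ∈ Finset.Icc a b, f k = f a * ∏ k ∈ Finset.Icc (a + 1) b, f k := by
  rw [show Finset.Icc a b = insert a (Finset.Icc (a + 1) b) by
    ext x; simp only [Finset.mem_Icc, Finset.mem_insert]; omega]
  exact Finset.prod_insert (by simp)


lemma qint_rec (m n : ℤ) : qint (m + 1) = q ^ (n + 1) * qint (m - n) + qint (n + 1) := by
  have h : q ^ (n + 1) * q ^ (m - n) = q ^ (m + 1) := by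
    rw [← zpow_add₀ hq0]; ring_nf
  rw [qint, qint, qint]
  field_simp
  linear_combination (1 - q)⁻¹ * h

lemma qfact_succ (n : ℕ) : qfact (n + 1) = qfact n * qint (n + 1) := by
  rw [qfact, Finset.prod_range_succ, qfact]

lemma pascal (m n : ℕ) :
    qbinomPoly (m + 1) (n + 1) =
      C (q ^ ((n : ℤ) + 1)) * qbinomPoly m (n + 1) + qbinomPoly m n := by
  set g : ℤ → Polynomial (RatFunc ℚ) := fun k => C (qint k) + C (q ^ k) * X with hg
  have e1 : qbinomPoly (m + 1) (n + 1) =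
      C (qfact (n + 1))⁻¹ * (g ((m : ℤ) + 1) * ∏ k ∈ Finset.Icc ((m : ℤ) - n + 1) (m : ℤ), g k) := by
    rw [qbinomPoly]
    have : Finset.Icc (((m + 1 : ℕ) : ℤ) - ((n + 1 : ℕ) : ℤ) + 1) ((m + 1 : ℕ) : ℤ)
        = Finset.Icc ((m : ℤ) - n + 1) ((m : ℤ) + 1) := by push_cast; ring_nf
    rw [this, prod_Icc_top _ _ (by omega)]
  have e2 : qbinomPoly m (n + 1) =
      C (qfact (n + 1))⁻¹ * (g ((m : ℤ) - n) * ∏ k ∈ Finset.Icc ((m : ℤ) - n + 1) (m : ℤ), g k) := by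
    rw [qbinomPoly]
    have : Finset.Icc ((m : ℤ) - ((n + 1 : ℕ) : ℤ) + 1) (m : ℤ)
        = Finset.Icc ((m : ℤ) - n) (m : ℤ) := by push_cast; ring_nf
    rw [this, prod_Icc_bot _ _ (by omega)]
  have e3 : qbinomPoly m n =
      C (qfact (n + 1))⁻¹ * (C (qint ((n : ℤ) + 1)) * ∏ k ∈ Finset.Icc ((m : ℤ) - n + 1) (m : ℤ), g k) := by
    rw [qbinomPoly, qfact_succ]
    rw [mul_inv, show ((n : ℤ) + 1) = ((n + 1 : ℕ) : ℤ) by push_cast; ring,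
      map_mul, mul_assoc]
    congr 1
    rw [← mul_assoc, ← map_mul, inv_mul_cancel₀ (qint_ne (n + 1) (by omega)), map_one, one_mul]
  rw [e1, e2, e3]
  have key : g ((m : ℤ) + 1) = C (q ^ ((n : ℤ) + 1)) * g ((m : ℤ) - n) + C (qint ((n : ℤ) + 1)) := by
    simp only [hg]
    rw [qint_rec (m : ℤ) (n : ℤ)]
    have hx : q ^ ((m : ℤ) + 1) = q ^ ((n : ℤ) + 1) * q ^ ((m : ℤ) - n) := by
      rw [← zpow_add₀ hq0]; ring_nf
    rw [hx]
    simp only [map_mul, map_add]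
    ring
  rw [key]
  ring

set_option maxHeartbeats 1000000 in
set_option synthInstance.maxHeartbeats 400000 in
theorem Phi_qbinomPoly (Φ : Polynomial (RatFunc ℚ) →ₗ[RatFunc ℚ] RatFunc ℚ)
    (hΦ : ∀ n : ℕ, Φ (qbinomPoly n n) = (qPoch q (-q ^ 2) n)⁻¹) :
    ∀ m n : ℕ, m ≤ n →
      Φ (qbinomPoly m n) = (-1) ^ (n - m) * q ^ (n - m) / qPoch q (-q ^ 2) n := by
  suffices H : ∀ d n m : ℕ, m + d = n →
      Φ (qbinomPoly m n) = (-1) ^ d * q ^ d / qPoch q (-q ^ 2) n by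
    intro m n hmn
    exact H (n - m) n m (by omega)
  intro d
  induction d with
  | zero =>
    intro n m h
    obtain rfl : m = n := by omega
    simp [hΦ, one_div]
  | succ d ih =>
    intro n m h
    obtain ⟨n', rfl⟩ : ∃ n', n = n' + 1 := ⟨m + d, by omega⟩
    have hp := congrArg Φ (pascal m n')
    rw [map_add,
      show (C (q ^ ((n' : ℤ) + 1)) * qbinomPoly m (n' + 1))
        = q ^ ((n' : ℤ) + 1) • qbinomPoly m (n' + 1) from (Polynomial.smul_eq_C_mul _).symm,
      map_smul, smul_eq_mul, ih (n' + 1) (m + 1) (by omega), ih n' m (by omega)] at hp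
    have hz : q ^ ((n' : ℤ) + 1) = q ^ (n' + 1) := by
      rw [show ((n' : ℤ) + 1) = ((n' + 1 : ℕ) : ℤ) by push_cast; ring, zpow_natCast]
    rw [hz, qPoch_succ] at hp
    rw [qPoch_succ]
    set x := Φ (qbinomPoly m (n' + 1)) with hx
    set P := qPoch q (-q ^ 2) n' with hP'
    have hP := qPoch_ne n'
    have h2 := one_add_qpow_ne (n' + 2)
    have hq1 : q ^ (n' + 1) ≠ 0 := pow_ne_zero _ hq0
    rw [← hP'] at hP
    field_simp at hp
    rw [eq_div_iff (mul_ne_zero hP h2)]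
    apply mul_left_cancel₀ (mul_ne_zero hq1 hP)
    linear_combination -P * hp
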